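/- Fix the number of groups u and let v ≥ v' ≥ 1. Let M, P ∈ ℝ^{u×v} be nonnegative matrices with (MᵀS*)_j > 0 for every j ≤ v, and let M', P' ∈ ℝ^{u×v'} be the submatrices consisting of their first v' columns, with B' ∈ ℝ^{v'} the first v' entries of B. Then the basic reproduction number is nondecreasing in the number of patches: ρ(G(M',P',B')) ≤ ρ(G(M,P,B)). -/

import Mathlib

open Matrix

/-- Spectral radius of a real matrix: the largest modulus of a complex eigenvalue. -/
noncomputable def specRad {n : Type*} [Fintype n] [DecidableEq n] (A : Matrix n n ℝ) : ℝ :=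
  sSup ((fun z : ℂ => ‖z‖) '' spectrum ℂ (A.map (fun x : ℝ => (x : ℂ))))

/-- Next generation matrix
`G(M,P,B) = diag(S*)·M·diag(B)·diag(MᵀS*)⁻¹·Pᵀ·diag(ν)·diag((μ+ν)∘(μ+γ+δ))⁻¹`. -/
noncomputable def NGM {u v : ℕ} (Sstar ν μ γ δ : Fin u → ℝ) (B : Fin v → ℝ)
    (M P : Matrix (Fin u) (Fin v) ℝ) : Matrix (Fin u) (Fin u) ℝ :=
  Matrix.diagonal Sstar * M * Matrix.diagonal B *
    Matrix.diagonal (fun j => ((Mᵀ *ᵥ Sstar) j)⁻¹) * Pᵀ *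
    Matrix.diagonal ν *
    Matrix.diagonal (fun i => ((μ i + ν i) * (μ i + γ i + δ i))⁻¹)

namespace SpecRadAux

open Filter
open scoped ENNReal NNReal Topology

attribute [local instance] Matrix.linftyOpNormedRing Matrix.linftyOpNormedAlgebra

variable {n : Type*} [Fintype n] [DecidableEq n] [Nonempty n]

set_option linter.unusedSectionVars false in
lemma map_pow' (A : Matrix n n ℝ) (k : ℕ) :
    (A.map (fun x : ℝ => (x : ℂ))) ^ k = (A ^ k).map (fun x : ℝ => (x : ℂ)) := by
  induction k with
  | zero => ext i j; simp [Matrix.one_apply]; split <;> simp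
  | succ k ih =>
    rw [pow_succ, pow_succ, ih]
    ext i j
    simp [Matrix.mul_apply, Matrix.map_apply]

set_option linter.unusedSectionVars false in
lemma pow_nonneg_le {A B : Matrix n n ℝ} (hA : ∀ i j, 0 ≤ A i j)
    (hAB : ∀ i j, A i j ≤ B i j) (k : ℕ) :
    (∀ i j, 0 ≤ (A ^ k) i j) ∧ (∀ i j, (A ^ k) i j ≤ (B ^ k) i j) := by
  induction k with
  | zero =>
    constructor <;> intro i j <;> simp [Matrix.one_apply] <;> split <;> simp
  | succ k ih =>
    obtain ⟨h1, h2⟩ := ih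
    constructor <;> intro i j <;> rw [pow_succ, Matrix.mul_apply]
    · exact Finset.sum_nonneg fun l _ => mul_nonneg (h1 i l) (hA l j)
    · rw [pow_succ, Matrix.mul_apply]
      exact Finset.sum_le_sum fun l _ => mul_le_mul (h2 i l) (hAB l j) (hA l j)
        ((h1 i l).trans (h2 i l))

set_option linter.unusedSectionVars false in
lemma nnnorm_map_le {A B : Matrix n n ℝ} (hA : ∀ i j, 0 ≤ A i j)
    (hAB : ∀ i j, A i j ≤ B i j) :
    ‖A.map (fun x : ℝ => (x : ℂ))‖₊ ≤ ‖B.map (fun x : ℝ => (x : ℂ))‖₊ := by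
  rw [Matrix.linfty_opNNNorm_def, Matrix.linfty_opNNNorm_def]
  apply Finset.sup_mono_fun
  intro i _
  apply Finset.sum_le_sum
  intro j _
  simp only [Matrix.map_apply, Complex.nnnorm_real]
  rw [Real.nnnorm_of_nonneg (hA i j), Real.nnnorm_of_nonneg ((hA i j).trans (hAB i j))]
  exact hAB i j

/-- Monotonicity of the spectral radius under the entrywise order on
nonnegative real matrices. -/
lemma specRad_mono {A B : Matrix n n ℝ} (hA : ∀ i j, 0 ≤ A i j)
    (hAB : ∀ i j, A i j ≤ B i j) : specRad A ≤ specRad B := by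
  set A' := A.map (fun x : ℝ => (x : ℂ)) with hA'
  set B' := B.map (fun x : ℝ => (x : ℂ)) with hB'
  have key : spectralRadius ℂ A' ≤ spectralRadius ℂ B' := by
    have h1 : ∀ k : ℕ, ‖A' ^ k‖₊ ≤ ‖B' ^ k‖₊ := by
      intro k
      rw [map_pow', map_pow']
      exact nnnorm_map_le (pow_nonneg_le hA hAB k).1 (pow_nonneg_le hA hAB k).2
    have tend : Tendsto (fun k : ℕ => (‖B' ^ (k+1)‖₊ : ℝ≥0∞) ^ (1/((k:ℝ)+1))) atTop
        (𝓝 (spectralRadius ℂ B')) := by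
      have := (spectrum.pow_nnnorm_pow_one_div_tendsto_nhds_spectralRadius B').comp
        (tendsto_add_atTop_nat 1)
      refine this.congr fun k => ?_
      simp only [Function.comp_apply, one_div]
      norm_num
    refine ge_of_tendsto tend (Filter.Eventually.of_forall fun k => ?_)
    calc spectralRadius ℂ A'
        ≤ (‖A' ^ (k + 1)‖₊ : ℝ≥0∞) ^ (1 / ((k:ℝ) + 1)) *
          (‖(1 : Matrix n n ℂ)‖₊ : ℝ≥0∞) ^ (1 / ((k:ℝ) + 1)) := by
          exact_mod_cast spectrum.spectralRadius_le_pow_nnnorm_pow_one_div ℂ A' k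
      _ = (‖A' ^ (k+1)‖₊ : ℝ≥0∞) ^ (1 / ((k:ℝ)+1)) := by
          simp [norm_one]
      _ ≤ (‖B' ^ (k+1)‖₊ : ℝ≥0∞) ^ (1 / ((k:ℝ)+1)) := by
          gcongr
          exact_mod_cast h1 (k+1)
  have hnt : spectralRadius ℂ B' ≠ ⊤ :=
    ((spectrum.spectralRadius_le_nnnorm (𝕜 := ℂ) (a := B')).trans_lt ENNReal.coe_lt_top).ne
  have hAnt : spectralRadius ℂ A' ≠ ⊤ :=
    ((spectrum.spectralRadius_le_nnnorm (𝕜 := ℂ) (a := A')).trans_lt ENNReal.coe_lt_top).ne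
  have hBcpt : IsCompact (spectrum ℂ B') := spectrum.isCompact B'
  have hBbdd : BddAbove ((fun z : ℂ => ‖z‖) '' spectrum ℂ B') :=
    (hBcpt.image continuous_norm).bddAbove
  have hspecB_nonneg : 0 ≤ specRad B :=
    Real.sSup_nonneg (by rintro x ⟨z, _, rfl⟩; exact norm_nonneg z)
  have h2 : (spectralRadius ℂ B').toReal ≤ specRad B := by
    apply ENNReal.toReal_le_of_le_ofReal hspecB_nonneg
    apply iSup₂_le
    intro z hz
    rw [← ENNReal.ofReal_coe_nnreal, coe_nnnorm]
    apply ENNReal.ofReal_le_ofReal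
    exact le_csSup hBbdd ⟨z, hz, rfl⟩
  have h3 : specRad A ≤ (spectralRadius ℂ A').toReal := by
    apply Real.sSup_le
    · rintro x ⟨z, hz, rfl⟩
      have hle : (‖z‖₊ : ℝ≥0∞) ≤ spectralRadius ℂ A' :=
        le_iSup₂ (f := fun k (_ : k ∈ spectrum ℂ A') => (‖k‖₊ : ℝ≥0∞)) z hz
      have := ENNReal.toReal_mono hAnt hle
      simpa using this
    · exact ENNReal.toReal_nonneg
  exact h3.trans ((ENNReal.toReal_mono hnt key).trans h2)

end SpecRadAux

lemma NGM_apply {u v : ℕ} (S ν μ γ δ : Fin u → ℝ) (B : Fin v → ℝ)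
    (M P : Matrix (Fin u) (Fin v) ℝ) (i k : Fin u) :
    NGM S ν μ γ δ B M P i k =
      (∑ j, S i * M i j * B j * ((Mᵀ *ᵥ S) j)⁻¹ * P k j) *
        (ν k * ((μ k + ν k) * (μ k + γ k + δ k))⁻¹) := by
  unfold NGM
  rw [Matrix.mul_diagonal, Matrix.mul_diagonal, Matrix.mul_apply]
  simp only [Matrix.mul_diagonal, Matrix.diagonal_mul, Matrix.transpose_apply]
  ring

lemma sum_castLE_le {v v' : ℕ} (h : v' ≤ v) (f : Fin v → ℝ) (hf : ∀ j, 0 ≤ f j) :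
    ∑ j : Fin v', f (Fin.castLE h j) ≤ ∑ j : Fin v, f j := by
  have him : ∑ j ∈ Finset.univ.image (Fin.castLE h), f j
      = ∑ j : Fin v', f (Fin.castLE h j) :=
    Finset.sum_image (fun a _ b _ hab => Fin.castLE_injective h hab)
  rw [← him]
  exact Finset.sum_le_sum_of_subset_of_nonneg (Finset.subset_univ _) (fun j _ _ => hf j)

/-- for a fixed number of groups, the basic reproduction number is
nondecreasing in the number of patches: restricting to the first `v'` of `v`
patches cannot increase it. -/
theorem stmt6 (u v v' : ℕ) (hu : 1 ≤ u) (hv' : 1 ≤ v') (hvv' : v' ≤ v)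
    (Λ μ ν γ δ η : Fin u → ℝ)
    (hΛ : ∀ i, 0 < Λ i) (hμ : ∀ i, 0 < μ i) (hν : ∀ i, 0 < ν i) (hγ : ∀ i, 0 < γ i)
    (hδ : ∀ i, 0 ≤ δ i) (hη : ∀ i, 0 ≤ η i)
    (B : Fin v → ℝ) (hB : ∀ j, 0 ≤ B j)
    (M P : Matrix (Fin u) (Fin v) ℝ)
    (hM : ∀ i j, 0 ≤ M i j) (hP : ∀ i j, 0 ≤ P i j)
    (Sstar : Fin u → ℝ) (hSstar : ∀ i, Sstar i = Λ i / μ i)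
    (hMS : ∀ j, 0 < (Mᵀ *ᵥ Sstar) j)
    :
    specRad (NGM Sstar ν μ γ δ (fun j => B (Fin.castLE hvv' j))
        (M.submatrix id (Fin.castLE hvv')) (P.submatrix id (Fin.castLE hvv'))) ≤
      specRad (NGM Sstar ν μ γ δ B M P) := by
  have : Nonempty (Fin u) := Fin.pos_iff_nonempty.mp hu
  have hS : ∀ i, 0 ≤ Sstar i := fun i => by
    rw [hSstar i]; exact div_nonneg (hΛ i).le (hμ i).le
  have hsub : ∀ j : Fin v',
      ((M.submatrix id (Fin.castLE hvv'))ᵀ *ᵥ Sstar) j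
        = (Mᵀ *ᵥ Sstar) (Fin.castLE hvv' j) := by
    intro j
    simp [Matrix.mulVec, dotProduct, Matrix.submatrix_apply]
  have hd : ∀ k : Fin u, 0 ≤ ν k * ((μ k + ν k) * (μ k + γ k + δ k))⁻¹ := by
    intro k
    have h1 : 0 < μ k + ν k := add_pos (hμ k) (hν k)
    have h2 : 0 < μ k + γ k + δ k := add_pos_of_pos_of_nonneg (add_pos (hμ k) (hγ k)) (hδ k)
    exact mul_nonneg (hν k).le (inv_nonneg.mpr (mul_pos h1 h2).le)
  have hterm : ∀ (i k : Fin u) (j : Fin v),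
      0 ≤ Sstar i * M i j * B j * ((Mᵀ *ᵥ Sstar) j)⁻¹ * P k j := by
    intro i k j
    have := hMS j
    have := hS i; have := hM i j; have := hB j; have := hP k j
    positivity
  apply SpecRadAux.specRad_mono
  · intro i k
    rw [NGM_apply]
    apply mul_nonneg _ (hd k)
    apply Finset.sum_nonneg
    intro j _
    rw [hsub j]
    simpa using hterm i k (Fin.castLE hvv' j)
  · intro i k
    rw [NGM_apply, NGM_apply]
    apply mul_le_mul_of_nonneg_right _ (hd k)
    have hrw : ∀ j : Fin v',
        Sstar i * (M.submatrix id (Fin.castLE hvv')) i j * B (Fin.castLE hvv' j) *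
            (((M.submatrix id (Fin.castLE hvv'))ᵀ *ᵥ Sstar) j)⁻¹ *
            (P.submatrix id (Fin.castLE hvv')) k j
          = Sstar i * M i (Fin.castLE hvv' j) * B (Fin.castLE hvv' j) *
            ((Mᵀ *ᵥ Sstar) (Fin.castLE hvv' j))⁻¹ * P k (Fin.castLE hvv' j) := by
      intro j
      rw [hsub j]
      simp [Matrix.submatrix_apply]
    calc ∑ j : Fin v', Sstar i * (M.submatrix id (Fin.castLE hvv')) i j *
            B (Fin.castLE hvv' j) *
            (((M.submatrix id (Fin.castLE hvv'))ᵀ *ᵥ Sstar) j)⁻¹ *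
            (P.submatrix id (Fin.castLE hvv')) k j
        = ∑ j : Fin v', (fun j' => Sstar i * M i j' * B j' * ((Mᵀ *ᵥ Sstar) j')⁻¹ * P k j')
            (Fin.castLE hvv' j) := by
          exact Finset.sum_congr rfl fun j _ => hrw j
      _ ≤ ∑ j : Fin v, Sstar i * M i j * B j * ((Mᵀ *ᵥ Sstar) j)⁻¹ * P k j :=
          sum_castLE_le hvv' _ (hterm i k)
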